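/- Let X be a nonnegative random variable with E[X] = μ < ∞ satisfying the Gaussian tail bound P(X > u) ≤ exp(-(u-μ)²/2) for all u ≥ μ. Then for every α > 1, E[X^α] ≤ μ^α + max{1, 2^{α-2}}·α·√(π/2)·(μ^{α-1} + E[|N|^{α-1}]), where N is a standard normal random variable. -/

import Mathlib

open MeasureTheory ProbabilityTheory Real
open scoped NNReal ENNReal

lemma aux_rpow_add_le (a b p : ℝ) (ha : 0 ≤ a) (hb : 0 ≤ b) (hp : 0 < p) :
    (a + b) ^ p ≤ max 1 ((2:ℝ) ^ (p - 1)) * (a ^ p + b ^ p) := by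
  have hsum : 0 ≤ a ^ p + b ^ p :=
    add_nonneg (Real.rpow_nonneg ha p) (Real.rpow_nonneg hb p)
  rcases le_total p 1 with h | h
  · have h2 := NNReal.rpow_add_le_add_rpow a.toNNReal b.toNNReal hp.le h
    have h3 : (a + b) ^ p ≤ a ^ p + b ^ p := by
      have h4 := NNReal.coe_le_coe.mpr h2
      push_cast at h4
      rwa [Real.coe_toNNReal a ha, Real.coe_toNNReal b hb] at h4
    exact h3.trans (le_mul_of_one_le_left hsum (le_max_left _ _))
  · have h2 := NNReal.rpow_add_le_mul_rpow_add_rpow a.toNNReal b.toNNReal h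
    have h3 : (a + b) ^ p ≤ (2:ℝ) ^ (p - 1) * (a ^ p + b ^ p) := by
      have h4 := NNReal.coe_le_coe.mpr h2
      push_cast at h4
      rwa [Real.coe_toNNReal a ha, Real.coe_toNNReal b hb] at h4
    exact h3.trans (mul_le_mul_of_nonneg_right (le_max_right _ _) hsum)

/-- If X ≥ 0 has mean μ and Gaussian tail P(X > u) ≤ e^{-(u-μ)²/2} for u ≥ μ, then for α > 1,
E[X^α] ≤ μ^α + max{1, 2^{α-2}}·α·√(π/2)·(μ^{α-1} + E[|N|^{α-1}]). -/
theorem moment_bound_borell {Ω : Type*} [MeasureSpace Ω]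
    [IsProbabilityMeasure (ℙ : Measure Ω)]
    (X : Ω → ℝ) (hXm : Measurable X) (hX0 : ∀ ω, 0 ≤ X ω) (hXint : Integrable X)
    (μ : ℝ) (hμ : μ = ∫ ω, X ω)
    (htail : ∀ u ≥ μ, ((ℙ : Measure Ω) {ω | u < X ω}).toReal ≤ Real.exp (-(u - μ)^2/2))
    (α : ℝ) (hα : 1 < α) :
    (∫ ω, X ω ^ α) ≤
      μ ^ α + max 1 ((2:ℝ) ^ (α - 2)) * α * Real.sqrt (Real.pi/2) *
        (μ ^ (α - 1) + ∫ x, |x| ^ (α - 1) ∂(gaussianReal 0 1)) := by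
  have hα0 : (0:ℝ) < α := lt_trans one_pos hα
  have hp : (0:ℝ) < α - 1 := by linarith
  set p := α - 1 with hpdef
  have hμ0 : 0 ≤ μ := hμ ▸ integral_nonneg hX0
  set M := ∫ x, |x| ^ p ∂(gaussianReal 0 1) with hMdef
  have hM0 : 0 ≤ M :=
    integral_nonneg (fun x => Real.rpow_nonneg (abs_nonneg x) p)
  set c2 := max (1:ℝ) ((2:ℝ) ^ (α - 2)) with hc2def
  have hc2_1 : (1:ℝ) ≤ c2 := le_max_left _ _
  have hc2_0 : (0:ℝ) ≤ c2 := by linarith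
  have hc2eq : c2 = max (1:ℝ) ((2:ℝ) ^ (p - 1)) := by
    rw [hc2def]
    congr 2
    rw [hpdef]; ring
  set S := Real.sqrt (Real.pi / 2) with hSdef
  have hS0 : 0 < S := Real.sqrt_pos.mpr (by positivity)
  have hS2 : S * 2 = Real.sqrt (2 * Real.pi) := by
    rw [hSdef, show (2:ℝ) * Real.pi = (Real.pi/2) * 2^2 by ring,
      Real.sqrt_mul (by positivity), Real.sqrt_sq (by norm_num)]
  have hexp : ∀ y : ℝ, Real.exp (-y^2/2) = Real.exp (-(1/2) * y^2) := by
    intro y; congr 1; ring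
  -- the half-Gaussian integral
  have hIexp : ∫ y in Set.Ioi (0:ℝ), Real.exp (-y^2/2) = S := by
    simp_rw [hexp]
    rw [integral_gaussian_Ioi (1/2), show Real.pi / (1/2) = (Real.pi/2) * 2^2 by ring,
      Real.sqrt_mul (by positivity), Real.sqrt_sq (by norm_num)]
    rw [hSdef]; ring
  have hIone : IntegrableOn (fun y : ℝ => Real.exp (-y^2/2)) (Set.Ioi 0) := by
    simp_rw [hexp]
    exact (integrable_exp_neg_mul_sq (by norm_num)).integrableOn
  have hIpow : IntegrableOn (fun y : ℝ => y ^ p * Real.exp (-y^2/2)) (Set.Ioi 0) := by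
    simp_rw [hexp]
    exact integrableOn_rpow_mul_exp_neg_mul_sq (by norm_num) (by linarith)
  set I1 := ∫ y in Set.Ioi (0:ℝ), y ^ p * Real.exp (-y^2/2) with hI1def
  have hI10 : 0 ≤ I1 := setIntegral_nonneg measurableSet_Ioi
    (fun y hy => mul_nonneg (Real.rpow_nonneg (le_of_lt hy) p) (Real.exp_nonneg _))
  -- Gaussian absolute moment
  have hMI : I1 = S * M := by
    have h1 : (1:ℝ≥0) ≠ 0 := one_ne_zero
    have hMeq : M = ∫ x, gaussianPDFReal 0 1 x * |x| ^ p := by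
      rw [hMdef, gaussianReal_of_var_ne_zero 0 h1,
        show volume.withDensity (gaussianPDF 0 1)
          = volume.withDensity (fun x => ((gaussianPDFReal 0 1 x).toNNReal : ℝ≥0∞)) from rfl,
        integral_withDensity_eq_integral_smul ((measurable_gaussianPDFReal 0 1).real_toNNReal)]
      congr 1
      ext x
      rw [NNReal.smul_def, smul_eq_mul, Real.coe_toNNReal _ (gaussianPDFReal_nonneg 0 1 x)]
    have hpdf : ∀ x : ℝ, gaussianPDFReal 0 1 x = (Real.sqrt (2*Real.pi))⁻¹ * Real.exp (-x^2/2) := by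
      intro x
      rw [gaussianPDFReal]
      norm_num
    have hMeq2 : M = (Real.sqrt (2*Real.pi))⁻¹ * (2 * I1) := by
      rw [hMeq]
      have e1 : ∀ x : ℝ, gaussianPDFReal 0 1 x * |x| ^ p
          = (Real.sqrt (2*Real.pi))⁻¹ * ((fun y : ℝ => y ^ p * Real.exp (-y^2/2)) |x|) := by
        intro x
        rw [hpdf]
        show _ = _ * (|x| ^ p * Real.exp (-|x|^2/2))
        rw [sq_abs]
        ring
      have e2 : ∫ x : ℝ, gaussianPDFReal 0 1 x * |x| ^ p
          = ∫ x : ℝ, (Real.sqrt (2*Real.pi))⁻¹ * ((fun y : ℝ => y ^ p * Real.exp (-y^2/2)) |x|) :=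
        integral_congr_ae (Filter.Eventually.of_forall e1)
      rw [e2, integral_const_mul,
        integral_comp_abs (f := fun y : ℝ => y ^ p * Real.exp (-y^2/2))]
    have hsq : (0:ℝ) < Real.sqrt (2*Real.pi) := Real.sqrt_pos.mpr (by positivity)
    rw [hMeq2, ← hS2]
    field_simp
  -- change of variables for the tail integral
  have hpre : (fun x : ℝ => x + μ) ⁻¹' (Set.Ioi μ) = Set.Ioi 0 := by
    ext x
    simp only [Set.mem_preimage, Set.mem_Ioi]
    constructor <;> intro h <;> linarith
  have hmp : MeasurePreserving (fun x : ℝ => x + μ) volume volume :=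
    measurePreserving_add_right volume μ
  have hemb : MeasurableEmbedding (fun x : ℝ => x + μ) :=
    (Homeomorph.addRight μ).measurableEmbedding
  set T := ∫ t in Set.Ioi μ, Real.exp (-(t-μ)^2/2) * t ^ p with hTdef
  have hT_eq : T = ∫ y in Set.Ioi (0:ℝ), Real.exp (-y^2/2) * (y+μ)^p := by
    have h2 := hmp.setIntegral_preimage_emb hemb
      (fun t => Real.exp (-(t-μ)^2/2) * t ^ p) (Set.Ioi μ)
    rw [hpre] at h2
    rw [hTdef, ← h2]
    apply setIntegral_congr_fun measurableSet_Ioi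
    intro y _
    simp only [add_sub_cancel_right]
  have hbound : ∀ y ∈ Set.Ioi (0:ℝ), Real.exp (-y^2/2) * (y+μ)^p
      ≤ Real.exp (-y^2/2) * (c2 * (μ^p + y^p)) := by
    intro y hy
    apply mul_le_mul_of_nonneg_left _ (Real.exp_nonneg _)
    rw [hc2eq, add_comm y μ]
    exact aux_rpow_add_le μ y p hμ0 (le_of_lt hy) hp
  have hdecomp : (fun y : ℝ => Real.exp (-y^2/2) * (c2 * (μ^p + y^p)))
      = fun y : ℝ => (c2*μ^p) * Real.exp (-y^2/2) + c2 * (y^p * Real.exp (-y^2/2)) := by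
    ext y; ring
  have hg_int : IntegrableOn (fun y : ℝ => Real.exp (-y^2/2) * (c2 * (μ^p + y^p)))
      (Set.Ioi 0) := by
    rw [hdecomp]
    exact (hIone.const_mul _).add (hIpow.const_mul _)
  have hf_nonneg : ∀ y ∈ Set.Ioi (0:ℝ), 0 ≤ Real.exp (-y^2/2) * (y+μ)^p := by
    intro y hy
    exact mul_nonneg (Real.exp_nonneg _) (Real.rpow_nonneg (by simp at hy; linarith) p)
  have hT_le : T ≤ c2 * S * (μ^p + M) := by
    rw [hT_eq]
    have step1 : ∫ y in Set.Ioi (0:ℝ), Real.exp (-y^2/2) * (y+μ)^p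
        ≤ ∫ y in Set.Ioi (0:ℝ), Real.exp (-y^2/2) * (c2 * (μ^p + y^p)) := by
      apply integral_mono_of_nonneg
      · exact (ae_restrict_iff' measurableSet_Ioi).mpr (Filter.Eventually.of_forall hf_nonneg)
      · exact hg_int
      · exact (ae_restrict_iff' measurableSet_Ioi).mpr (Filter.Eventually.of_forall hbound)
    have step2 : ∫ y in Set.Ioi (0:ℝ), Real.exp (-y^2/2) * (c2 * (μ^p + y^p))
        = (c2*μ^p) * S + c2 * I1 := by
      rw [hdecomp, integral_add (hIone.const_mul _) (hIpow.const_mul _),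
        integral_const_mul, integral_const_mul, hIexp, hI1def]
    calc _ ≤ (c2*μ^p) * S + c2 * I1 := step1.trans_eq step2
    _ = c2 * S * (μ^p + M) := by rw [hMI]; ring
  have hT0 : 0 ≤ T := by
    rw [hT_eq]
    exact setIntegral_nonneg measurableSet_Ioi hf_nonneg
  -- the integral over (0, μ]
  have hIocInt : IntegrableOn (fun t : ℝ => t ^ p) (Set.Ioc 0 μ) :=
    (intervalIntegral.intervalIntegrable_rpow' (by linarith : (-1:ℝ) < p)).1
  have hIoc : ∫ t in Set.Ioc (0:ℝ) μ, t ^ p = μ ^ α / α := by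
    rw [← intervalIntegral.integral_of_le hμ0,
      integral_rpow (Or.inl (by linarith : (-1:ℝ) < p)),
      Real.zero_rpow (by positivity : p + 1 ≠ 0),
      show p + 1 = α by rw [hpdef]; ring]
    ring
  -- integrability of the tail integrand
  have hTint : IntegrableOn (fun t : ℝ => Real.exp (-(t-μ)^2/2) * t ^ p) (Set.Ioi μ) := by
    refine (hmp.integrableOn_comp_preimage hemb).mp ?_
    have hcomp : ((fun t : ℝ => Real.exp (-(t-μ)^2/2) * t ^ p) ∘ (fun x : ℝ => x + μ))
        = fun y : ℝ => Real.exp (-y^2/2) * (y+μ)^p := by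
      ext y
      simp only [Function.comp_apply, add_sub_cancel_right]
    rw [hpre, hcomp]
    apply Integrable.mono' hg_int
    · exact (Measurable.mul (((measurable_id'.pow measurable_const).neg.div_const 2).exp)
        ((measurable_id'.add_const μ).pow measurable_const)).aestronglyMeasurable
    · rw [ae_restrict_iff' measurableSet_Ioi]
      apply Filter.Eventually.of_forall
      intro y hy
      rw [Real.norm_eq_abs, abs_of_nonneg (hf_nonneg y hy)]
      exact hbound y hy
  -- layer cake
  have key := lintegral_rpow_eq_lintegral_meas_lt_mul (ℙ : Measure Ω)
    (Filter.Eventually.of_forall hX0) hXm.aemeasurable hα0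
  rw [← hpdef] at key
  set J := ∫⁻ t in Set.Ioi (0:ℝ), (ℙ : Measure Ω) {a | t < X a} * ENNReal.ofReal (t ^ p)
    with hJdef
  have hJ : J ≤ ENNReal.ofReal (μ^α/α) + ENNReal.ofReal T := by
    rw [hJdef, ← Set.Ioc_union_Ioi_eq_Ioi hμ0,
      lintegral_union measurableSet_Ioi (Set.Ioc_disjoint_Ioi le_rfl)]
    apply add_le_add
    · calc ∫⁻ t in Set.Ioc (0:ℝ) μ, (ℙ : Measure Ω) {a | t < X a} * ENNReal.ofReal (t ^ p)
          ≤ ∫⁻ t in Set.Ioc (0:ℝ) μ, ENNReal.ofReal (t ^ p) := by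
            apply lintegral_mono
            intro t
            calc (ℙ : Measure Ω) {a | t < X a} * ENNReal.ofReal (t ^ p)
                ≤ 1 * ENNReal.ofReal (t ^ p) := mul_le_mul_left prob_le_one _
              _ = ENNReal.ofReal (t ^ p) := one_mul _
        _ = ENNReal.ofReal (∫ t in Set.Ioc (0:ℝ) μ, t ^ p) := by
            exact (ofReal_integral_eq_lintegral_ofReal hIocInt
              ((ae_restrict_iff' measurableSet_Ioc).mpr
                (Filter.Eventually.of_forall (fun t ht => Real.rpow_nonneg ht.1.le p)))).symm
        _ = ENNReal.ofReal (μ^α/α) := by rw [hIoc]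
    · calc ∫⁻ t in Set.Ioi μ, (ℙ : Measure Ω) {a | t < X a} * ENNReal.ofReal (t ^ p)
          ≤ ∫⁻ t in Set.Ioi μ, ENNReal.ofReal (Real.exp (-(t-μ)^2/2) * t ^ p) := by
            apply lintegral_mono_ae
            rw [ae_restrict_iff' measurableSet_Ioi]
            apply Filter.Eventually.of_forall
            intro t ht
            rw [ENNReal.ofReal_mul (Real.exp_nonneg _)]
            apply mul_le_mul_left
            rw [← ENNReal.ofReal_toReal (measure_ne_top ℙ _)]
            exact ENNReal.ofReal_le_ofReal (htail t (le_of_lt ht))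
        _ = ENNReal.ofReal T := by
            rw [hTdef]
            exact (ofReal_integral_eq_lintegral_ofReal hTint
              ((ae_restrict_iff' measurableSet_Ioi).mpr (Filter.Eventually.of_forall
                (fun t ht => mul_nonneg (Real.exp_nonneg _)
                  (Real.rpow_nonneg (by linarith [hμ0, Set.mem_Ioi.mp ht]) p))))).symm
  set B := μ ^ α + c2 * α * S * (μ ^ p + M) with hBdef
  have hB0 : 0 ≤ B := by
    rw [hBdef]
    have h1 : 0 ≤ μ ^ α := Real.rpow_nonneg hμ0 α
    have h2 : 0 ≤ μ ^ p := Real.rpow_nonneg hμ0 p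
    have h3 : 0 ≤ c2 * α * S * (μ ^ p + M) :=
      mul_nonneg (mul_nonneg (mul_nonneg hc2_0 hα0.le) hS0.le) (add_nonneg h2 hM0)
    linarith
  have final : (∫⁻ ω, ENNReal.ofReal (X ω ^ α)) ≤ ENNReal.ofReal B := by
    rw [key]
    calc ENNReal.ofReal α * J
        ≤ ENNReal.ofReal α * (ENNReal.ofReal (μ^α/α) + ENNReal.ofReal T) :=
          mul_le_mul_right hJ _
      _ = ENNReal.ofReal (α * (μ^α/α + T)) := by
          rw [← ENNReal.ofReal_add (by positivity) hT0, ← ENNReal.ofReal_mul hα0.le]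
      _ ≤ ENNReal.ofReal B := by
          apply ENNReal.ofReal_le_ofReal
          have h1 : α * (μ^α/α + T) = μ^α + α * T := by field_simp
          rw [h1, hBdef]
          nlinarith [mul_le_mul_of_nonneg_left hT_le hα0.le]
  have lhs_eq : ∫ ω, X ω ^ α = (∫⁻ ω, ENNReal.ofReal (X ω ^ α)).toReal := by
    rw [integral_eq_lintegral_of_nonneg_ae
      (Filter.Eventually.of_forall (fun ω => Real.rpow_nonneg (hX0 ω) α))
      ((hXm.pow measurable_const).aestronglyMeasurable)]
  rw [lhs_eq]
  calc (∫⁻ ω, ENNReal.ofReal (X ω ^ α)).toReal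
      ≤ (ENNReal.ofReal B).toReal := ENNReal.toReal_mono ENNReal.ofReal_ne_top final
    _ = B := ENNReal.toReal_ofReal hB0
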